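/- For each i ∈ {1,…,2m} and j ∈ {1,…,n}, the sets g↑ ∩ B_ij and g↑ ∩ L_ij are convex (each is a line segment on the corresponding side of the cell, possibly empty). -/
import Mathlib


open Set

noncomputable section

/-- The piecewise linear closed curve through the vertices `x 0, x 1, …`:
`f(i+α) = (1-α) • x i + α • x (i+1)`. -/
def fCurve {k : ℕ} (x : ℕ → EuclideanSpace ℝ (Fin k)) (t : ℝ) :
    EuclideanSpace ℝ (Fin k) :=
  (1 - Int.fract t) • x (⌊t⌋.toNat) + Int.fract t • x (⌊t⌋.toNat + 1)

/-- The extension of the curve from `[0,m]` to `[0,2m]` by `f(u) = f(u-m)` for `u > m`. -/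
def fCurveExt {k : ℕ} (m : ℕ) (x : ℕ → EuclideanSpace ℝ (Fin k)) (u : ℝ) :
    EuclideanSpace ℝ (Fin k) :=
  if u ≤ m then fCurve x u else fCurve x (u - m)

/-- The rectangle `D = [0,2m] × [0,n]`. -/
def Dfull (m n : ℕ) : Set (ℝ × ℝ) :=
  Icc (0:ℝ) (2*(m:ℝ)) ×ˢ Icc (0:ℝ) (n:ℝ)

/-- The free space `D_ε = {(u,v) ∈ D : dist (f_X u) (f_Y v) ≤ ε}`. -/
def Dfree {k : ℕ} (m n : ℕ) (x y : ℕ → EuclideanSpace ℝ (Fin k)) (ε : ℝ) :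
    Set (ℝ × ℝ) :=
  {p ∈ Dfull m n | dist (fCurveExt m x p.1) (fCurve y p.2) ≤ ε}

/-- The top side `T = [0,2m] × {n}` of `D`. -/
def Tside (m n : ℕ) : Set (ℝ × ℝ) := Icc (0:ℝ) (2*(m:ℝ)) ×ˢ {(n:ℝ)}

/-- The bottom side `B = [0,2m] × {0}` of `D`. -/
def Bside (m : ℕ) : Set (ℝ × ℝ) := Icc (0:ℝ) (2*(m:ℝ)) ×ˢ {(0:ℝ)}

/-- A monotone (non-decreasing) path: a connected subset `γ ⊆ Dε` with
`(u-u')·(v-v') ≥ 0` for all `(u,v), (u',v') ∈ γ`. -/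
def IsMonPath (Dε γ : Set (ℝ × ℝ)) : Prop :=
  γ ⊆ Dε ∧ IsConnected γ ∧
    ∀ p ∈ γ, ∀ q ∈ γ, (p.1 - q.1) * (p.2 - q.2) ≥ 0

/-- Two points are mutually reachable if some monotone path contains both. -/
def Reach (Dε : Set (ℝ × ℝ)) (p q : ℝ × ℝ) : Prop :=
  ∃ γ : Set (ℝ × ℝ), IsMonPath Dε γ ∧ p ∈ γ ∧ q ∈ γ

/-- `g↓`: the points of `Dε` mutually reachable with at least one point of `B`. -/
def gDown (m : ℕ) (Dε : Set (ℝ × ℝ)) : Set (ℝ × ℝ) :=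
  {p ∈ Dε | ∃ q ∈ Bside m, Reach Dε p q}

/-- `g↑`: the points of `Dε` mutually reachable with at least one point of `T`. -/
def gUp (m n : ℕ) (Dε : Set (ℝ × ℝ)) : Set (ℝ × ℝ) :=
  {p ∈ Dε | ∃ q ∈ Tside m n, Reach Dε p q}

/-- The pointer `r↑(p)`: the maximum `u* ∈ [0,2m]` such that `p` and `(u*, n)`
are mutually reachable. -/
def rUp (m n : ℕ) (Dε : Set (ℝ × ℝ)) (p : ℝ × ℝ) : ℝ :=
  sSup {u : ℝ | u ∈ Icc (0:ℝ) (2*(m:ℝ)) ∧ Reach Dε p (u, (n:ℝ))}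

/-- The pointer `r↓(p)`: for `p` with `p.2 > 0`, the maximum `u* ∈ [0,2m]` such
that `p` and `(u*, 0)` are mutually reachable; on the bottom side `r↓(u,0) = u`. -/
def rDown (m : ℕ) (Dε : Set (ℝ × ℝ)) (p : ℝ × ℝ) : ℝ :=
  if p.2 = 0 then p.1
  else sSup {u : ℝ | u ∈ Icc (0:ℝ) (2*(m:ℝ)) ∧ Reach Dε p (u, (0:ℝ))}

/-- The cell `D_ij = [i-1,i] × [j-1,j]`. -/
def cellD (i j : ℕ) : Set (ℝ × ℝ) :=
  Icc ((i:ℝ)-1) (i:ℝ) ×ˢ Icc ((j:ℝ)-1) (j:ℝ)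

/-- The top side `T_ij` of the cell `D_ij`. -/
def cellT (i j : ℕ) : Set (ℝ × ℝ) := Icc ((i:ℝ)-1) (i:ℝ) ×ˢ {(j:ℝ)}

/-- The bottom side `B_ij` of the cell `D_ij`. -/
def cellB (i j : ℕ) : Set (ℝ × ℝ) := Icc ((i:ℝ)-1) (i:ℝ) ×ˢ {((j:ℝ)-1)}

/-- The right side `R_ij` of the cell `D_ij`. -/
def cellR (i j : ℕ) : Set (ℝ × ℝ) := {(i:ℝ)} ×ˢ Icc ((j:ℝ)-1) (j:ℝ)

/-- The left side `L_ij` of the cell `D_ij`. -/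
def cellL (i j : ℕ) : Set (ℝ × ℝ) := {((i:ℝ)-1)} ×ˢ Icc ((j:ℝ)-1) (j:ℝ)

/-- The partial order `≼` on `D`: `(u1,v1) ≼ (u2,v2)` iff `u1 ≤ u2` and `v1 ≥ v2`. -/
def prec (p q : ℝ × ℝ) : Prop := p.1 ≤ q.1 ∧ q.2 ≤ p.2

/-! ### Auxiliary lemmas -/

section AuxLemmas

variable {k : ℕ}

lemma fCurve_nat (x : ℕ → EuclideanSpace ℝ (Fin k)) (l : ℕ) :
    fCurve x (l : ℝ) = x l := by
  simp [fCurve, Int.fract_natCast, Int.floor_natCast]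

lemma fCurve_affine (x : ℕ → EuclideanSpace ℝ (Fin k)) (l : ℕ) {u : ℝ}
    (h1 : (l : ℝ) ≤ u) (h2 : u ≤ (l : ℝ) + 1) :
    fCurve x u = x l + (u - l) • (x (l + 1) - x l) := by
  rcases eq_or_lt_of_le h2 with h | h
  · have hu : u = ((l + 1 : ℕ) : ℝ) := by push_cast; linarith
    rw [hu, fCurve_nat]
    have : (((l + 1 : ℕ) : ℝ) - (l : ℝ)) = 1 := by push_cast; ring
    rw [this, one_smul]
    abel
  · have hfl : ⌊u⌋ = (l : ℤ) := by
      apply Int.floor_eq_iff.mpr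
      constructor
      · exact_mod_cast h1
      · push_cast; linarith
    have hfr : Int.fract u = u - l := by
      rw [Int.fract, hfl]; push_cast; ring
    have htn : (⌊u⌋).toNat = l := by rw [hfl]; exact Int.toNat_natCast l
    rw [fCurve, hfr, htn]
    module

lemma fCurveExt_affine (m : ℕ) (x : ℕ → EuclideanSpace ℝ (Fin k))
    (hx : x m = x 0) (i : ℕ) (hi : 1 ≤ i) :
    ∃ a B : EuclideanSpace ℝ (Fin k),
      ∀ u ∈ Icc ((i : ℝ) - 1) (i : ℝ), fCurveExt m x u = a + (u - ((i : ℝ) - 1)) • B := by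
  by_cases him : i ≤ m
  · refine ⟨x (i - 1), x i - x (i - 1), fun u hu => ?_⟩
    have hc : ((i - 1 : ℕ) : ℝ) = (i : ℝ) - 1 := by
      have : (i : ℝ) ≥ 1 := by exact_mod_cast hi
      push_cast [hi]; ring
    have hsucc : (i - 1) + 1 = i := by omega
    have hum : u ≤ (m : ℝ) := le_trans hu.2 (by exact_mod_cast him)
    rw [fCurveExt, if_pos hum,
      fCurve_affine x (i - 1) (by rw [hc]; exact hu.1)
        (by rw [hc]; have := hu.2; linarith), hsucc, hc]
  · push_neg at him
    have him' : m + 1 ≤ i := him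
    set l := i - 1 - m with hl
    have hcl : ((l : ℕ) : ℝ) = (i : ℝ) - 1 - m := by
      have : ((i : ℕ) : ℝ) ≥ (m : ℝ) + 1 := by exact_mod_cast him'
      push_cast [show i - 1 - m + m + 1 = i by omega] at *
      have : ((i - 1 - m : ℕ) : ℝ) = (i : ℝ) - 1 - m := by
        have h2 : ((i - 1 - m : ℕ) : ℝ) + (m : ℝ) + 1 = (i : ℝ) := by
          exact_mod_cast congrArg (fun t : ℕ => (t : ℝ)) (show i - 1 - m + m + 1 = i by omega)
        linarith
      exact this
    refine ⟨x l, x (l + 1) - x l, fun u hu => ?_⟩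
    by_cases hum : u ≤ (m : ℝ)
    · -- then u = m and i = m + 1, l = 0
      have hmi : (m : ℝ) ≤ (i : ℝ) - 1 := by
        have : (m : ℝ) + 1 ≤ (i : ℝ) := by exact_mod_cast him'
        linarith
      have huem : u = (m : ℝ) := le_antisymm hum (le_trans hmi hu.1)
      have hieq : (i : ℝ) - 1 = (m : ℝ) := le_antisymm (huem ▸ hu.1) hmi
      have hl0 : l = 0 := by
        have : ((l : ℕ) : ℝ) = 0 := by rw [hcl, hieq]; ring
        exact_mod_cast this
      rw [fCurveExt, if_pos hum, huem, fCurve_nat, hx, hl0]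
      have : (m : ℝ) - ((i : ℝ) - 1) = 0 := by rw [hieq]; ring
      rw [this, zero_smul, add_zero]
    · push_neg at hum
      rw [fCurveExt, if_neg (not_le.mpr hum)]
      have h1 : ((l : ℕ) : ℝ) ≤ u - m := by rw [hcl]; have := hu.1; linarith
      have h2 : u - m ≤ ((l : ℕ) : ℝ) + 1 := by rw [hcl]; have := hu.2; linarith
      rw [fCurve_affine x l h1 h2]
      congr 1
      have : u - (m : ℝ) - ((l : ℕ) : ℝ) = u - ((i : ℝ) - 1) := by rw [hcl]; ring
      rw [this]

/-- Convexity of the free space on the bottom side of a cell. -/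
lemma convex_Dfree_cellB (m n : ℕ) (x y : ℕ → EuclideanSpace ℝ (Fin k))
    (hx : x m = x 0) (ε : ℝ) (i j : ℕ) (hi : 1 ≤ i) :
    Convex ℝ (Dfree m n x y ε ∩ cellB i j) := by
  obtain ⟨a, B, hAff⟩ := fCurveExt_affine m x hx i hi
  intro p hp q hq s t hs ht hst
  obtain ⟨⟨hpD, hpd⟩, hpc⟩ := hp
  obtain ⟨⟨hqD, hqd⟩, hqc⟩ := hq
  have hp2 : p.2 = (j : ℝ) - 1 := hpc.2
  have hq2 : q.2 = (j : ℝ) - 1 := hqc.2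
  have hp1 : p.1 ∈ Icc ((i : ℝ) - 1) (i : ℝ) := hpc.1
  have hq1 : q.1 ∈ Icc ((i : ℝ) - 1) (i : ℝ) := hqc.1
  set w := s • p + t • q with hw
  have hw1 : w.1 = s * p.1 + t * q.1 := rfl
  have hw2 : w.2 = s * p.2 + t * q.2 := rfl
  have hw2' : w.2 = (j : ℝ) - 1 := by rw [hw2, hp2, hq2]; linear_combination ((j:ℝ)-1) * hst
  have hw1mem : w.1 ∈ Icc ((i : ℝ) - 1) (i : ℝ) := by
    constructor <;> rw [hw1]
    · nlinarith [hp1.1, hq1.1]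
    · nlinarith [hp1.2, hq1.2]
  have hwD : w ∈ Dfull m n := by
    refine ⟨?_, ?_⟩
    · constructor <;> rw [hw1]
      · nlinarith [hpD.1.1, hqD.1.1]
      · nlinarith [hpD.1.2, hqD.1.2]
    · rw [hw2', ← hp2]; exact hpD.2
  refine ⟨⟨hwD, ?_⟩, hw1mem, hw2'⟩
  -- the distance condition
  set c := fCurve y ((j : ℝ) - 1) with hc
  set e := (i : ℝ) - 1 with he
  have hpe : fCurveExt m x p.1 = a + (p.1 - e) • B := hAff p.1 hp1
  have hqe : fCurveExt m x q.1 = a + (q.1 - e) • B := hAff q.1 hq1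
  have hwe : fCurveExt m x w.1 = a + (w.1 - e) • B := hAff w.1 hw1mem
  have hpball : a + (p.1 - e) • B ∈ Metric.closedBall c ε := by
    rw [Metric.mem_closedBall, ← hpe]; rw [hp2] at hpd; exact hpd
  have hqball : a + (q.1 - e) • B ∈ Metric.closedBall c ε := by
    rw [Metric.mem_closedBall, ← hqe]; rw [hq2] at hqd; exact hqd
  have hcomb := (convex_closedBall c ε) hpball hqball hs ht hst
  have key : s • (a + (p.1 - e) • B) + t • (a + (q.1 - e) • B)
      = (s + t) • a + (s * (p.1 - e) + t * (q.1 - e)) • B := by module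
  rw [hst, one_smul] at key
  have key2 : s * (p.1 - e) + t * (q.1 - e) = w.1 - e := by
    rw [hw1]; linear_combination (-e) * hst
  rw [key, key2] at hcomb
  rw [hw2', ← hc, hwe]
  exact Metric.mem_closedBall.mp hcomb

/-- Convexity of the free space on the left side of a cell. -/
lemma convex_Dfree_cellL (m n : ℕ) (x y : ℕ → EuclideanSpace ℝ (Fin k))
    (ε : ℝ) (i j : ℕ) (hj : 1 ≤ j) :
    Convex ℝ (Dfree m n x y ε ∩ cellL i j) := by
  intro p hp q hq s t hs ht hst
  obtain ⟨⟨hpD, hpd⟩, hpc⟩ := hp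
  obtain ⟨⟨hqD, hqd⟩, hqc⟩ := hq
  have hp1 : p.1 = (i : ℝ) - 1 := hpc.1
  have hq1 : q.1 = (i : ℝ) - 1 := hqc.1
  have hp2 : p.2 ∈ Icc ((j : ℝ) - 1) (j : ℝ) := hpc.2
  have hq2 : q.2 ∈ Icc ((j : ℝ) - 1) (j : ℝ) := hqc.2
  set w := s • p + t • q with hw
  have hw1 : w.1 = s * p.1 + t * q.1 := rfl
  have hw2 : w.2 = s * p.2 + t * q.2 := rfl
  have hw1' : w.1 = (i : ℝ) - 1 := by rw [hw1, hp1, hq1]; linear_combination ((i:ℝ)-1) * hst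
  have hw2mem : w.2 ∈ Icc ((j : ℝ) - 1) (j : ℝ) := by
    constructor <;> rw [hw2]
    · nlinarith [hp2.1, hq2.1]
    · nlinarith [hp2.2, hq2.2]
  have hwD : w ∈ Dfull m n := by
    refine ⟨?_, ?_⟩
    · rw [hw1', ← hp1]; exact hpD.1
    · constructor <;> rw [hw2]
      · nlinarith [hpD.2.1, hqD.2.1]
      · nlinarith [hpD.2.2, hqD.2.2]
  refine ⟨⟨hwD, ?_⟩, hw1', hw2mem⟩
  -- the distance condition: fCurve y is affine on [j-1, j]
  set c := fCurveExt m x ((i : ℝ) - 1) with hc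
  have hcj : ((j - 1 : ℕ) : ℝ) = (j : ℝ) - 1 := by push_cast [hj]; ring
  have hsucc : (j - 1) + 1 = j := by omega
  have hAff : ∀ v ∈ Icc ((j : ℝ) - 1) (j : ℝ),
      fCurve y v = y (j - 1) + (v - ((j : ℝ) - 1)) • (y j - y (j - 1)) := by
    intro v hv
    have := fCurve_affine y (j - 1) (u := v) (by rw [hcj]; exact hv.1)
      (by rw [hcj]; have := hv.2; linarith)
    rw [this, hsucc, hcj]
  set a := y (j - 1)
  set B := y j - y (j - 1)
  set e := (j : ℝ) - 1 with he
  have hpball : a + (p.2 - e) • B ∈ Metric.closedBall c ε := by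
    rw [Metric.mem_closedBall, dist_comm, ← hAff p.2 hp2, hc, ← hp1]; exact hpd
  have hqball : a + (q.2 - e) • B ∈ Metric.closedBall c ε := by
    rw [Metric.mem_closedBall, dist_comm, ← hAff q.2 hq2, hc, ← hq1]; exact hqd
  have hcomb := (convex_closedBall c ε) hpball hqball hs ht hst
  have key : s • (a + (p.2 - e) • B) + t • (a + (q.2 - e) • B)
      = (s + t) • a + (s * (p.2 - e) + t * (q.2 - e)) • B := by module
  rw [hst, one_smul] at key
  have key2 : s * (p.2 - e) + t * (q.2 - e) = w.2 - e := by
    rw [hw2]; linear_combination (-e) * hst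
  rw [key, key2] at hcomb
  have := Metric.mem_closedBall.mp hcomb
  rw [dist_comm] at this
  rw [hw1', ← hc, hAff w.2 hw2mem]
  exact this

/-- Any two points of a monotone set are comparable in the product order. -/
lemma mono_comparable {p q : ℝ × ℝ} (h : (p.1 - q.1) * (p.2 - q.2) ≥ 0) :
    (q.1 ≤ p.1 ∧ q.2 ≤ p.2) ∨ (p.1 ≤ q.1 ∧ p.2 ≤ q.2) := by
  rcases le_total q.1 p.1 with h1 | h1 <;> rcases le_total q.2 p.2 with h2 | h2
  · exact Or.inl ⟨h1, h2⟩
  · rcases eq_or_lt_of_le h1 with he | hlt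
    · exact Or.inr ⟨le_of_eq he.symm, h2⟩
    · exact Or.inl ⟨h1, by nlinarith⟩
  · rcases eq_or_lt_of_le h1 with he | hlt
    · exact Or.inl ⟨le_of_eq he.symm, h2⟩
    · exact Or.inr ⟨h1, by nlinarith⟩
  · exact Or.inr ⟨h1, h2⟩

lemma segment_coord_bounds {q r w : ℝ × ℝ} (h1 : q.1 ≤ r.1) (h2 : q.2 ≤ r.2)
    (hw : w ∈ segment ℝ q r) :
    q.1 ≤ w.1 ∧ w.1 ≤ r.1 ∧ q.2 ≤ w.2 ∧ w.2 ≤ r.2 := by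
  obtain ⟨a, b, ha, hb, hab, rfl⟩ := hw
  simp only [Prod.fst_add, Prod.snd_add, Prod.smul_fst, Prod.smul_snd, smul_eq_mul]
  have hb1 : b = 1 - a := by linarith
  subst hb1
  refine ⟨?_, ?_, ?_, ?_⟩
  · nlinarith [mul_nonneg hb (sub_nonneg.2 h1)]
  · nlinarith [mul_nonneg ha (sub_nonneg.2 h1)]
  · nlinarith [mul_nonneg hb (sub_nonneg.2 h2)]
  · nlinarith [mul_nonneg ha (sub_nonneg.2 h2)]

lemma segment_mono {q r : ℝ × ℝ} (h1 : q.1 ≤ r.1) (h2 : q.2 ≤ r.2) {w w' : ℝ × ℝ}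
    (hw : w ∈ segment ℝ q r) (hw' : w' ∈ segment ℝ q r) :
    (w.1 - w'.1) * (w.2 - w'.2) ≥ 0 := by
  obtain ⟨a, b, ha, hb, hab, rfl⟩ := hw
  obtain ⟨a', b', ha', hb', hab', rfl⟩ := hw'
  simp only [Prod.fst_add, Prod.snd_add, Prod.smul_fst, Prod.smul_snd, smul_eq_mul]
  have hb1 : b = 1 - a := by linarith
  have hb1' : b' = 1 - a' := by linarith
  subst hb1 hb1'
  have key : (a * q.1 + (1 - a) * r.1 - (a' * q.1 + (1 - a') * r.1)) *
      (a * q.2 + (1 - a) * r.2 - (a' * q.2 + (1 - a') * r.2))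
      = (a - a') ^ 2 * ((r.1 - q.1) * (r.2 - q.2)) := by ring
  rw [ge_iff_le, ← sub_nonneg] at *
  calc (0:ℝ) ≤ (a - a') ^ 2 * ((r.1 - q.1) * (r.2 - q.2)) := by positivity
    _ = _ := by rw [← key]; ring

/-- Preconnectedness of the upper truncation of a monotone connected set. -/
lemma preconn_trunc_aux {γ : Set (ℝ × ℝ)} (hγc : IsPreconnected γ)
    (hγm : ∀ p ∈ γ, ∀ q ∈ γ, (p.1 - q.1) * (p.2 - q.2) ≥ 0)
    {r : ℝ × ℝ} (hrγ : r ∈ γ) {F G : Set (ℝ × ℝ)}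
    (hF : IsClosed F) (hG : IsClosed G)
    (hcov : γ ∩ {s | r.1 ≤ s.1 ∧ r.2 ≤ s.2} ⊆ F ∪ G) (hrF : r ∈ F)
    (hGne : (γ ∩ {s | r.1 ≤ s.1 ∧ r.2 ≤ s.2} ∩ G).Nonempty) :
    (γ ∩ {s | r.1 ≤ s.1 ∧ r.2 ≤ s.2} ∩ (F ∩ G)).Nonempty := by
  set K : Set (ℝ × ℝ) := {s | r.1 ≤ s.1 ∧ r.2 ≤ s.2} with hK
  set K' : Set (ℝ × ℝ) := {s | s.1 ≤ r.1 ∧ s.2 ≤ r.2} with hK'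
  have hKcl : IsClosed K := by
    have : K = {s : ℝ × ℝ | r.1 ≤ s.1} ∩ {s : ℝ × ℝ | r.2 ≤ s.2} := by
      ext s; simp [hK, Set.mem_setOf_eq]
    rw [this]
    exact (isClosed_le continuous_const continuous_fst).inter
      (isClosed_le continuous_const continuous_snd)
  have hK'cl : IsClosed K' := by
    have : K' = {s : ℝ × ℝ | s.1 ≤ r.1} ∩ {s : ℝ × ℝ | s.2 ≤ r.2} := by
      ext s; simp [hK', Set.mem_setOf_eq]
    rw [this]
    exact (isClosed_le continuous_fst continuous_const).inter
      (isClosed_le continuous_snd continuous_const)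
  have := isPreconnected_closed_iff.mp hγc ((F ∩ K) ∪ K') (G ∩ K)
    ((hF.inter hKcl).union hK'cl) (hG.inter hKcl)
    (by
      intro s hs
      rcases mono_comparable (hγm s hs r hrγ) with hc | hc
      · -- r ≤ s, so s ∈ K
        have hsK : s ∈ K := ⟨hc.1, hc.2⟩
        rcases hcov ⟨hs, hsK⟩ with h | h
        · exact Or.inl (Or.inl ⟨h, hsK⟩)
        · exact Or.inr ⟨h, hsK⟩
      · exact Or.inl (Or.inr ⟨hc.1, hc.2⟩))
    ⟨r, hrγ, Or.inl ⟨hrF, le_refl _, le_refl _⟩⟩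
    (by obtain ⟨s, ⟨hsγ, hsK⟩, hsG⟩ := hGne; exact ⟨s, hsγ, hsG, hsK⟩)
  obtain ⟨s, hsγ, hsFK', hsGK⟩ := this
  rcases hsFK' with ⟨hsF, hsK⟩ | hsK'
  · exact ⟨s, ⟨hsγ, hsK⟩, hsF, hsGK.1⟩
  · have hseq : s = r :=
      Prod.ext (le_antisymm hsK'.1 hsGK.2.1) (le_antisymm hsK'.2 hsGK.2.2)
    subst hseq
    exact ⟨s, ⟨hsγ, hsGK.2⟩, hrF, hsGK.1⟩

lemma preconn_trunc {γ : Set (ℝ × ℝ)} (hγc : IsPreconnected γ)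
    (hγm : ∀ p ∈ γ, ∀ q ∈ γ, (p.1 - q.1) * (p.2 - q.2) ≥ 0)
    {r : ℝ × ℝ} (hrγ : r ∈ γ) :
    IsPreconnected (γ ∩ {s | r.1 ≤ s.1 ∧ r.2 ≤ s.2}) := by
  rw [isPreconnected_closed_iff]
  intro F G hF hG hcov hFne hGne
  have hrC : r ∈ γ ∩ {s | r.1 ≤ s.1 ∧ r.2 ≤ s.2} := ⟨hrγ, le_refl _, le_refl _⟩
  rcases hcov hrC with hrF | hrG
  · exact preconn_trunc_aux hγc hγm hrγ hF hG hcov hrF hGne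
  · have := preconn_trunc_aux hγc hγm hrγ hG hF
      (by intro s hs; rcases hcov hs with h | h; exacts [Or.inr h, Or.inl h]) hrG hFne
    obtain ⟨s, hs1, hs2, hs3⟩ := this
    exact ⟨s, hs1, hs3, hs2⟩

/-- Key lemma: if `r ∈ g↑`, `q ≤ r` in the product order, and the segment from
`q` to `r` lies in `Dε`, then `q ∈ g↑`. -/
lemma reach_up_of_le {m n : ℕ} {Dε : Set (ℝ × ℝ)} (hsub : Dε ⊆ Dfull m n)
    {q r : ℝ × ℝ} (h1 : q.1 ≤ r.1) (h2 : q.2 ≤ r.2)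
    (hseg : segment ℝ q r ⊆ Dε) (hr : r ∈ gUp m n Dε) : q ∈ gUp m n Dε := by
  obtain ⟨hrD, t, htT, γ, ⟨hγD, hγconn, hγm⟩, hrγ, htγ⟩ := hr
  have htn : t.2 = (n : ℝ) := htT.2
  refine ⟨hseg (left_mem_segment ℝ q r), ?_⟩
  rcases mono_comparable (hγm t htγ r hrγ) with hc | hc
  · -- r ≤ t : truncate γ above r and attach the segment
    set C := γ ∩ {s | r.1 ≤ s.1 ∧ r.2 ≤ s.2} with hC
    have hrC : r ∈ C := ⟨hrγ, le_refl _, le_refl _⟩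
    have htC : t ∈ C := ⟨htγ, hc.1, hc.2⟩
    have hCpre : IsPreconnected C := preconn_trunc hγconn.isPreconnected hγm hrγ
    refine ⟨t, htT, C ∪ segment ℝ q r, ⟨?_, ?_, ?_⟩,
      Or.inr (left_mem_segment ℝ q r), Or.inl htC⟩
    · intro s hs
      rcases hs with hs | hs
      · exact hγD hs.1
      · exact hseg hs
    · refine ⟨⟨r, Or.inl hrC⟩, ?_⟩
      exact hCpre.union r hrC (right_mem_segment ℝ q r)
        (convex_segment q r).isPreconnected
    · rintro p' (hp' | hp') q' (hq' | hq')
      · exact hγm p' hp'.1 q' hq'.1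
      · obtain ⟨hb1, hb2, hb3, hb4⟩ := segment_coord_bounds h1 h2 hq'
        have := hp'.2
        exact mul_nonneg (by linarith [this.1]) (by linarith [this.2])
      · obtain ⟨hb1, hb2, hb3, hb4⟩ := segment_coord_bounds h1 h2 hp'
        have := hq'.2
        have h1' : p'.1 - q'.1 ≤ 0 := by linarith [this.1]
        have h2' : p'.2 - q'.2 ≤ 0 := by linarith [this.2]
        have h := mul_nonneg (neg_nonneg.2 h1') (neg_nonneg.2 h2')
        rw [neg_mul_neg] at h
        exact h
      · exact segment_mono h1 h2 hp' hq'
  · -- t ≤ r : then r itself is on the top side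
    have hrD' := hsub hrD
    have hr2 : r.2 = (n : ℝ) := le_antisymm hrD'.2.2 (htn ▸ hc.2)
    refine ⟨r, ⟨hrD'.1, hr2⟩, segment ℝ q r, ⟨hseg, ?_, fun p' hp' q' hq' =>
      segment_mono h1 h2 hp' hq'⟩, left_mem_segment ℝ q r, right_mem_segment ℝ q r⟩
    exact ⟨⟨q, left_mem_segment ℝ q r⟩, (convex_segment q r).isPreconnected⟩

end AuxLemmas

theorem stmt10
    (k m n : ℕ) (hk : 1 ≤ k) (hm : 1 ≤ m) (hn : 1 ≤ n)
    (x y : ℕ → EuclideanSpace ℝ (Fin k)) (hx : x m = x 0) (hy : y n = y 0)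
    (ε : ℝ) (hε : 0 ≤ ε)
    (Dε : Set (ℝ × ℝ)) (hDε : Dε = Dfree m n x y ε)
    (i j : ℕ) (hi1 : 1 ≤ i) (hi2 : i ≤ 2*m) (hj1 : 1 ≤ j) (hj2 : j ≤ n) :
    Convex ℝ (gUp m n Dε ∩ cellB i j) ∧ Convex ℝ (gUp m n Dε ∩ cellL i j) := by
  subst hDε
  have hsub : Dfree m n x y ε ⊆ Dfull m n := fun p hp => hp.1
  constructor
  · -- bottom side
    have hconv : Convex ℝ (Dfree m n x y ε ∩ cellB i j) :=
      convex_Dfree_cellB m n x y hx ε i j hi1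
    intro p hp r hr s t hs ht hst
    obtain ⟨hpU, hpB⟩ := hp
    obtain ⟨hrU, hrB⟩ := hr
    have hpD : p ∈ Dfree m n x y ε := hpU.1
    have hrD : r ∈ Dfree m n x y ε := hrU.1
    have hsegpr : segment ℝ p r ⊆ Dfree m n x y ε ∩ cellB i j :=
      hconv.segment_subset ⟨hpD, hpB⟩ ⟨hrD, hrB⟩
    set w := s • p + t • r with hw
    have hwseg : w ∈ segment ℝ p r := ⟨s, t, hs, ht, hst, rfl⟩
    have hwB : w ∈ cellB i j := (hsegpr hwseg).2
    have hw1 : w.1 = s * p.1 + t * r.1 := rfl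
    have hp2 : p.2 = (j : ℝ) - 1 := hpB.2
    have hr2 : r.2 = (j : ℝ) - 1 := hrB.2
    have hw2 : w.2 = (j : ℝ) - 1 := hwB.2
    refine ⟨?_, hwB⟩
    rcases le_total p.1 r.1 with hle | hle
    · -- w ≤ r componentwise
      refine reach_up_of_le hsub (q := w) (r := r) ?_ ?_ ?_ hrU
      · have ht' : t = 1 - s := by linarith
        rw [hw1, ht']; nlinarith [mul_nonneg hs (sub_nonneg.2 hle)]
      · rw [hw2, hr2]
      · exact subset_trans
          ((convex_segment p r).segment_subset hwseg (right_mem_segment ℝ p r))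
          (hsegpr.trans inter_subset_left)
    · -- w ≤ p componentwise
      refine reach_up_of_le hsub (q := w) (r := p) ?_ ?_ ?_ hpU
      · have hs' : s = 1 - t := by linarith
        rw [hw1, hs']; nlinarith [mul_nonneg ht (sub_nonneg.2 hle)]
      · rw [hw2, hp2]
      · exact subset_trans
          ((convex_segment p r).segment_subset hwseg (left_mem_segment ℝ p r))
          (hsegpr.trans inter_subset_left)
  · -- left side
    have hconv : Convex ℝ (Dfree m n x y ε ∩ cellL i j) :=
      convex_Dfree_cellL m n x y ε i j hj1
    intro p hp r hr s t hs ht hst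
    obtain ⟨hpU, hpB⟩ := hp
    obtain ⟨hrU, hrB⟩ := hr
    have hpD : p ∈ Dfree m n x y ε := hpU.1
    have hrD : r ∈ Dfree m n x y ε := hrU.1
    have hsegpr : segment ℝ p r ⊆ Dfree m n x y ε ∩ cellL i j :=
      hconv.segment_subset ⟨hpD, hpB⟩ ⟨hrD, hrB⟩
    set w := s • p + t • r with hw
    have hwseg : w ∈ segment ℝ p r := ⟨s, t, hs, ht, hst, rfl⟩
    have hwL : w ∈ cellL i j := (hsegpr hwseg).2
    have hw2 : w.2 = s * p.2 + t * r.2 := rfl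
    have hp1 : p.1 = (i : ℝ) - 1 := hpB.1
    have hr1 : r.1 = (i : ℝ) - 1 := hrB.1
    have hw1 : w.1 = (i : ℝ) - 1 := hwL.1
    refine ⟨?_, hwL⟩
    rcases le_total p.2 r.2 with hle | hle
    · refine reach_up_of_le hsub (q := w) (r := r) ?_ ?_ ?_ hrU
      · rw [hw1, hr1]
      · have ht' : t = 1 - s := by linarith
        rw [hw2, ht']; nlinarith [mul_nonneg hs (sub_nonneg.2 hle)]
      · exact subset_trans
          ((convex_segment p r).segment_subset hwseg (right_mem_segment ℝ p r))
          (hsegpr.trans inter_subset_left)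
    · refine reach_up_of_le hsub (q := w) (r := p) ?_ ?_ ?_ hpU
      · rw [hw1, hp1]
      · have hs' : s = 1 - t := by linarith
        rw [hw2, hs']; nlinarith [mul_nonneg ht (sub_nonneg.2 hle)]
      · exact subset_trans
          ((convex_segment p r).segment_subset hwseg (left_mem_segment ℝ p r))
          (hsegpr.trans inter_subset_left)
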